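/- arXiv:2604.14861 — 2 statements merged into one kernel-verified Lean document; each statement's English description precedes it below -/
import Mathlib

section
/- Fix N ≥ 1, m ≥ 1, dimensions n_1,…,n_N ≥ 1, matrices A_i ∈ ℝ^{m×n_i}, b ∈ ℝ^m, Δ > 0, ρ > 0, γ > 0, and ε_1,…,ε_N > 0. Let λ̂, λ̂⁺, λ*, d̂, d̂⁺ ∈ ℝ^m and x_i, x_i⁺ ∈ ℝ^{n_i} satisfy ‖ d̂ − ( Σ_{i=1}^N A_i x_i − b ) ‖ ≤ 2√m·Δ and ‖ d̂⁺ − ( Σ_{i=1}^N A_i x_i⁺ − b ) ‖ ≤ 2√m·Δ. Then (1/γ)·⟨ λ̂ − λ̂⁺ , d̂ − d̂⁺ ⟩ ≤ ( Σ_{i=1}^N ε_i / (2γ²ρ) )·‖λ̂ − λ̂⁺‖² + ½ Σ_{i=1}^N (ρ/ε_i)·‖x_i − x_i⁺‖²_{A_iᵀA_i} + (4√m·Δ/γ)·( ‖λ̂ − λ*‖ + ‖λ̂⁺ − λ*‖ ). -/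
open scoped RealInnerProductSpace

/-- Weighted squared seminorm `‖v‖²_M := vᵀ M v`. -/
noncomputable def wnormSq {k : ℕ} (M : Matrix (Fin k) (Fin k) ℝ)
    (v : EuclideanSpace ℝ (Fin k)) : ℝ :=
  dotProduct v (M.mulVec v)

lemma wnormSq_eq {m k : ℕ} (A : Matrix (Fin m) (Fin k) ℝ) (v : EuclideanSpace ℝ (Fin k)) :
    wnormSq (A.transpose * A) v
      = ‖(show EuclideanSpace ℝ (Fin m) from WithLp.toLp 2 (A.mulVec v))‖ ^ 2 := by
  have h : ‖(show EuclideanSpace ℝ (Fin m) from WithLp.toLp 2 (A.mulVec v))‖ ^ 2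
      = ⟪(show EuclideanSpace ℝ (Fin m) from WithLp.toLp 2 (A.mulVec v)),
          (show EuclideanSpace ℝ (Fin m) from WithLp.toLp 2 (A.mulVec v))⟫ := by
    rw [real_inner_self_eq_norm_sq]
  rw [h]
  rw [PiLp.inner_apply]
  simp only [RCLike.inner_apply, conj_trivial]
  rw [wnormSq, ← Matrix.mulVec_mulVec, Matrix.dotProduct_mulVec, Matrix.vecMul_transpose]
  rfl

lemma young (a b γ ρ ε : ℝ) (ha : 0 ≤ a) (hb : 0 ≤ b)
    (hγ : 0 < γ) (hρ : 0 < ρ) (hε : 0 < ε) :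
    (1 / γ) * (a * b) ≤ ε / (2 * γ ^ 2 * ρ) * a ^ 2 + 1 / 2 * (ρ / ε * b ^ 2) := by
  rw [← sub_nonneg]
  have key : ε / (2 * γ ^ 2 * ρ) * a ^ 2 + 1 / 2 * (ρ / ε * b ^ 2) - (1 / γ) * (a * b)
      = ((ε * a - γ * ρ * b) ^ 2) / (2 * γ ^ 2 * ρ * ε) := by
    field_simp
    ring
  rw [key]
  positivity

/-- **Bound (22)–(23) on term (b).**  If the quantized estimates `d̂, d̂⁺` of the
global constraint residuals are each accurate to within `2√m·Δ`, then
`(1/γ)⟨λ̂ − λ̂⁺, d̂ − d̂⁺⟩ ≤ (∑_i ε_i/(2γ²ρ))‖λ̂ − λ̂⁺‖²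
  + ½∑_i (ρ/ε_i)‖x_i − x_i⁺‖²_{A_iᵀA_i} + (4√m·Δ/γ)(‖λ̂ − λ*‖ + ‖λ̂⁺ − λ*‖)`. -/
theorem term_b_bound
    (N m : ℕ) (hN : 1 ≤ N) (hm : 1 ≤ m)
    (n : Fin N → ℕ) (hn : ∀ i, 1 ≤ n i)
    (A : ∀ i, Matrix (Fin m) (Fin (n i)) ℝ)
    (b : EuclideanSpace ℝ (Fin m))
    (Δ ρ γ : ℝ) (hΔ : 0 < Δ) (hρ : 0 < ρ) (hγ : 0 < γ)
    (ε : Fin N → ℝ) (hε : ∀ i, 0 < ε i)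
    (lamHat lamHatP lamStar dHat dHatP : EuclideanSpace ℝ (Fin m))
    (x xp : ∀ i, EuclideanSpace ℝ (Fin (n i)))
    (hd : ‖dHat - ((∑ i, (show EuclideanSpace ℝ (Fin m) from WithLp.toLp 2 ((A i).mulVec (x i)))) - b)‖
            ≤ 2 * Real.sqrt m * Δ)
    (hdP : ‖dHatP - ((∑ i, (show EuclideanSpace ℝ (Fin m) from WithLp.toLp 2 ((A i).mulVec (xp i)))) - b)‖
            ≤ 2 * Real.sqrt m * Δ) :
    (1 / γ) * ⟪lamHat - lamHatP, dHat - dHatP⟫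
      ≤ ((∑ i, ε i) / (2 * γ ^ 2 * ρ)) * ‖lamHat - lamHatP‖ ^ 2
        + (1 / 2) * ∑ i, (ρ / ε i) * wnormSq ((A i).transpose * A i) (x i - xp i)
        + (4 * Real.sqrt m * Δ / γ) * (‖lamHat - lamStar‖ + ‖lamHatP - lamStar‖) := by
  set w : EuclideanSpace ℝ (Fin m) := lamHat - lamHatP with hw
  set r : EuclideanSpace ℝ (Fin m) :=
    (∑ i, (show EuclideanSpace ℝ (Fin m) from WithLp.toLp 2 ((A i).mulVec (x i)))) - b with hr
  set rP : EuclideanSpace ℝ (Fin m) :=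
    (∑ i, (show EuclideanSpace ℝ (Fin m) from WithLp.toLp 2 ((A i).mulVec (xp i)))) - b with hrP
  have hrd : r - rP = ∑ i, (show EuclideanSpace ℝ (Fin m) from WithLp.toLp 2 ((A i).mulVec (x i - xp i))) := by
    rw [hr, hrP]
    rw [sub_sub_sub_cancel_right, ← Finset.sum_sub_distrib]
    exact Finset.sum_congr rfl fun i _ => by
      show WithLp.toLp 2 _ - WithLp.toLp 2 _ = WithLp.toLp 2 _
      rw [Matrix.mulVec_sub, WithLp.toLp_sub]
  have hsplit : dHat - dHatP = (r - rP) + ((dHat - r) - (dHatP - rP)) := by abel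
  have hinner : ⟪w, dHat - dHatP⟫
      = (∑ i, ⟪w, (show EuclideanSpace ℝ (Fin m) from WithLp.toLp 2 ((A i).mulVec (x i - xp i)))⟫)
        + ⟪w, (dHat - r) - (dHatP - rP)⟫ := by
    rw [hsplit, inner_add_right, hrd, inner_sum]
  -- per-term Young bound
  have key : ∀ i, (1 / γ) * ⟪w, (show EuclideanSpace ℝ (Fin m) from WithLp.toLp 2 ((A i).mulVec (x i - xp i)))⟫
      ≤ (ε i / (2 * γ ^ 2 * ρ)) * ‖w‖ ^ 2
        + (1 / 2) * ((ρ / ε i) * wnormSq ((A i).transpose * A i) (x i - xp i)) := by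
    intro i
    set u : EuclideanSpace ℝ (Fin m) := (show EuclideanSpace ℝ (Fin m) from WithLp.toLp 2 ((A i).mulVec (x i - xp i))) with hu
    have hcs : ⟪w, u⟫ ≤ ‖w‖ * ‖u‖ := real_inner_le_norm w u
    have hwn : wnormSq ((A i).transpose * A i) (x i - xp i) = ‖u‖ ^ 2 := wnormSq_eq _ _
    rw [hwn]
    have hεi := hε i
    have hnw : (0:ℝ) ≤ ‖w‖ := norm_nonneg _
    have hnu : (0:ℝ) ≤ ‖u‖ := norm_nonneg _
    have h1 : (1 / γ) * ⟪w, u⟫ ≤ (1 / γ) * (‖w‖ * ‖u‖) := by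
      apply mul_le_mul_of_nonneg_left hcs
      positivity
    exact h1.trans (young ‖w‖ ‖u‖ γ ρ (ε i) hnw hnu hγ hρ hεi)
  -- error term
  have herr : (1 / γ) * ⟪w, (dHat - r) - (dHatP - rP)⟫
      ≤ (4 * Real.sqrt m * Δ / γ) * (‖lamHat - lamStar‖ + ‖lamHatP - lamStar‖) := by
    have hsm : (0:ℝ) ≤ Real.sqrt m := Real.sqrt_nonneg _
    have hcs : ⟪w, (dHat - r) - (dHatP - rP)⟫ ≤ ‖w‖ * ‖(dHat - r) - (dHatP - rP)‖ :=
      real_inner_le_norm _ _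
    have hne : ‖(dHat - r) - (dHatP - rP)‖ ≤ 4 * Real.sqrt m * Δ := by
      calc ‖(dHat - r) - (dHatP - rP)‖ ≤ ‖dHat - r‖ + ‖dHatP - rP‖ := norm_sub_le _ _
        _ ≤ 2 * Real.sqrt m * Δ + 2 * Real.sqrt m * Δ := add_le_add hd hdP
        _ = 4 * Real.sqrt m * Δ := by ring
    have hnw : ‖w‖ ≤ ‖lamHat - lamStar‖ + ‖lamHatP - lamStar‖ := by
      have : w = (lamHat - lamStar) - (lamHatP - lamStar) := by rw [hw]; abel
      rw [this]; exact norm_sub_le _ _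
    have h2 : ⟪w, (dHat - r) - (dHatP - rP)⟫
        ≤ (4 * Real.sqrt m * Δ) * (‖lamHat - lamStar‖ + ‖lamHatP - lamStar‖) := by
      calc ⟪w, (dHat - r) - (dHatP - rP)⟫ ≤ ‖w‖ * ‖(dHat - r) - (dHatP - rP)‖ := hcs
        _ ≤ ‖w‖ * (4 * Real.sqrt m * Δ) := by
            apply mul_le_mul_of_nonneg_left hne (norm_nonneg _)
        _ ≤ (‖lamHat - lamStar‖ + ‖lamHatP - lamStar‖) * (4 * Real.sqrt m * Δ) := by
            apply mul_le_mul_of_nonneg_right hnw; positivity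
        _ = (4 * Real.sqrt m * Δ) * (‖lamHat - lamStar‖ + ‖lamHatP - lamStar‖) := by ring
    calc (1 / γ) * ⟪w, (dHat - r) - (dHatP - rP)⟫
        ≤ (1 / γ) * ((4 * Real.sqrt m * Δ) * (‖lamHat - lamStar‖ + ‖lamHatP - lamStar‖)) := by
          apply mul_le_mul_of_nonneg_left h2; positivity
      _ = (4 * Real.sqrt m * Δ / γ) * (‖lamHat - lamStar‖ + ‖lamHatP - lamStar‖) := by ring
  rw [hinner, mul_add, Finset.mul_sum]
  have hsum : ∑ i, (1 / γ) * ⟪w, (show EuclideanSpace ℝ (Fin m) from WithLp.toLp 2 ((A i).mulVec (x i - xp i)))⟫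
      ≤ ∑ i, ((ε i / (2 * γ ^ 2 * ρ)) * ‖w‖ ^ 2
        + (1 / 2) * ((ρ / ε i) * wnormSq ((A i).transpose * A i) (x i - xp i))) :=
    Finset.sum_le_sum fun i _ => key i
  have hfin := add_le_add hsum herr
  refine hfin.trans (le_of_eq ?_)
  rw [Finset.sum_add_distrib, ← Finset.sum_mul, ← Finset.mul_sum, ← Finset.sum_div]
end

section
/- Fix N ≥ 1, m ≥ 1, dimensions n_1,…,n_N ≥ 1, matrices A_i ∈ ℝ^{m×n_i}, b ∈ ℝ^m, convex f_i : ℝ^{n_i} → ℝ, ρ > 0, 0 < γ < 2, Δ > 0, ε_1,…,ε_N > 0, and symmetric matrices P_i ∈ ℝ^{n_i×n_i}. Let (x*, λ*) satisfy Σ_{i=1}^N A_i x_i* = b and L(x, λ*) ≥ L(x*, λ*) for all x. Let x_i, x_i⁺ ∈ ℝ^{n_i} and λ̂, λ̂⁺, d̂, d̂⁺ ∈ ℝ^m satisfy: (i) ‖d̂ − (Σ_i A_i x_i − b)‖ ≤ 2√m·Δ and ‖d̂⁺ − (Σ_i A_i x_i⁺ − b)‖ ≤ 2√m·Δ; (ii)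 λ̂⁺ = λ̂ + γρ·d̂⁺; (iii) for each i there is a subgradient g_i of f_i at x_i⁺ with g_i + A_iᵀλ̂ + ρ·A_iᵀ(A_i(x_i⁺ − x_i) + d̂) + P_i(x_i⁺ − x_i) = 0. Then 0 ≤ L(x⁺, λ*) − L(x*, λ*) ≤ V(x, λ̂) − V(x⁺, λ̂⁺) − Θ + E_Δ, where V(x, λ̂) := ½ Σ_i ‖x_i − x_i*‖²_{ρA_iᵀA_i + P_i} + (1/(2γρ))·‖λ̂ − λ*‖², Θ := ((2 − γ − Σ_i ε_i)/(2γ²ρ))·‖λ̂ − λ̂⁺‖² + ½ Σ_i ‖x_i − x_i⁺‖²_{ρA_iᵀA_i + P_i − (ρ/ε_i)A_iᵀA_i}, and E_Δ := (8/γ + 4|γ−1|/γ + 2)·√m·Δ·max(‖λ̂ − λ*‖, ‖λ̂⁺ − λ*‖) + 4ρ√m·Δ·max(‖d̂‖, ‖d̂⁺‖). -/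
open scoped RealInnerProductSpace

-- auxiliary lemmas
lemma idot {k : ℕ} (a b : EuclideanSpace ℝ (Fin k)) :
    ⟪a, b⟫ = dotProduct (a : Fin k → ℝ) (b : Fin k → ℝ) := by
  simp [PiLp.inner_apply, dotProduct, mul_comm]

lemma adj {m k : ℕ} (A : Matrix (Fin m) (Fin k) ℝ) (w : Fin m → ℝ) (u : Fin k → ℝ) :
    dotProduct (A.transpose.mulVec w) u = dotProduct w (A.mulVec u) := by
  rw [dotProduct_comm, Matrix.dotProduct_mulVec, Matrix.vecMul_transpose,
    dotProduct_comm]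

lemma dot_symm {k : ℕ} (M : Matrix (Fin k) (Fin k) ℝ) (h : M.IsSymm)
    (a b : Fin k → ℝ) :
    dotProduct a (M.mulVec b) = dotProduct b (M.mulVec a) := by
  rw [Matrix.dotProduct_mulVec, ← Matrix.mulVec_transpose, h.eq, dotProduct_comm]

lemma three_point {k : ℕ} (M : Matrix (Fin k) (Fin k) ℝ) (hM : M.IsSymm)
    (a b c : Fin k → ℝ) :
    dotProduct (a - b) (M.mulVec (a - c))
      = (wnormSq M (WithLp.toLp 2 (a - c)) - wnormSq M (WithLp.toLp 2 (b - c)) + wnormSq M (WithLp.toLp 2 (a - b))) / 2 := by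
  have hsym := fun u v => dot_symm M hM u v
  simp only [wnormSq, Matrix.mulVec_sub, sub_dotProduct, dotProduct_sub]
  rw [hsym b a, hsym c a, hsym c b]
  ring

lemma wnormSq_sub_M {k : ℕ} (M₁ M₂ : Matrix (Fin k) (Fin k) ℝ) (v : EuclideanSpace ℝ (Fin k)) :
    wnormSq (M₁ - M₂) v = wnormSq M₁ v - wnormSq M₂ v := by
  simp [wnormSq, Matrix.sub_mulVec, dotProduct_sub]

lemma wnormSq_smul_M {k : ℕ} (c : ℝ) (M : Matrix (Fin k) (Fin k) ℝ) (v : EuclideanSpace ℝ (Fin k)) :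
    wnormSq (c • M) v = c * wnormSq M v := by
  simp [wnormSq, Matrix.smul_mulVec, dotProduct_smul, smul_eq_mul]

lemma wnormSq_neg_pi {k : ℕ} (M : Matrix (Fin k) (Fin k) ℝ) (v : Fin k → ℝ) :
    wnormSq M (WithLp.toLp 2 <| -v) = wnormSq M (WithLp.toLp 2 v) := by
  simp [wnormSq, Matrix.mulVec_neg, dotProduct_neg, neg_dotProduct]

lemma wnormSq_sub_comm {k : ℕ} (M : Matrix (Fin k) (Fin k) ℝ) (a b : EuclideanSpace ℝ (Fin k)) :
    wnormSq M (a - b) = wnormSq M (b - a) := by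
  have h : (a - b : EuclideanSpace ℝ (Fin k)) = -(b - a) := by abel
  rw [h]
  exact wnormSq_neg_pi M ((b : Fin k → ℝ) - a)

lemma wnormSq_ATA {m k : ℕ} (A : Matrix (Fin m) (Fin k) ℝ) (v : EuclideanSpace ℝ (Fin k)) :
    wnormSq (A.transpose * A) v
      = ‖(WithLp.toLp 2 <| A.mulVec v)‖ ^ 2 := by
  rw [← real_inner_self_eq_norm_sq, idot]
  show dotProduct (v : Fin k → ℝ) ((A.transpose * A).mulVec v) = _
  rw [← Matrix.mulVec_mulVec, dotProduct_comm, adj]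

lemma young_s11 {k : ℕ} (u v : EuclideanSpace ℝ (Fin k)) (ε : ℝ) (hε : 0 < ε) :
    ⟪u, v⟫ ≤ (1 / (2 * ε)) * ‖u‖ ^ 2 + (ε / 2) * ‖v‖ ^ 2 := by
  have h1 := real_inner_le_norm u v
  have h2 : 0 ≤ (‖u‖ - ε * ‖v‖) ^ 2 := sq_nonneg _
  have h3 : (0:ℝ) < 1 / (2 * ε) := by positivity
  have key : (1 / (2 * ε)) * ‖u‖ ^ 2 + (ε / 2) * ‖v‖ ^ 2 - ‖u‖ * ‖v‖
      = (1 / (2 * ε)) * (‖u‖ - ε * ‖v‖) ^ 2 := by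
    field_simp
    ring
  nlinarith [mul_nonneg h3.le h2]

lemma mulVec_sub_E {m k : ℕ} (A : Matrix (Fin m) (Fin k) ℝ) (a b : EuclideanSpace ℝ (Fin k)) :
    (WithLp.toLp 2 <| A.mulVec (a - b))
      = (WithLp.toLp 2 <| A.mulVec a)
        - (WithLp.toLp 2 <| A.mulVec b) := by
  rw [← WithLp.toLp_sub]; exact congrArg (WithLp.toLp 2) (Matrix.mulVec_sub A a b)

lemma mulVec_sub_comm_E {m k : ℕ} (A : Matrix (Fin m) (Fin k) ℝ) (a b : EuclideanSpace ℝ (Fin k)) :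
    (WithLp.toLp 2 <| A.mulVec (a - b))
      = -(WithLp.toLp 2 <| A.mulVec (b - a)) := by
  rw [mulVec_sub_E, mulVec_sub_E]
  abel

/-- gradient inner product identity -/
lemma grad_inner {m k : ℕ} (A : Matrix (Fin m) (Fin k) ℝ) (P : Matrix (Fin k) (Fin k) ℝ)
    (hP : P.IsSymm) (ρ : ℝ) (lamHat dHat : EuclideanSpace ℝ (Fin m))
    (xo xpo xso : EuclideanSpace ℝ (Fin k)) :
    ⟪(WithLp.toLp 2 (A.transpose.mulVec lamHat
        + ρ • A.transpose.mulVec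
            (A.mulVec (xpo - xo) + dHat)
        + P.mulVec (xpo - xo))), xpo - xso⟫
      = ⟪lamHat, (WithLp.toLp 2 <| A.mulVec (xpo - xso))⟫
        + ρ * ⟪dHat, (WithLp.toLp 2 <| A.mulVec (xpo - xso))⟫
        + (wnormSq (ρ • (A.transpose * A) + P) (xpo - xso)
           - wnormSq (ρ • (A.transpose * A) + P) (xo - xso)
           + wnormSq (ρ • (A.transpose * A) + P) (xpo - xo)) / 2 := by
  have hM : (ρ • (A.transpose * A) + P).IsSymm := by
    unfold Matrix.IsSymm
    rw [Matrix.transpose_add, Matrix.transpose_smul, Matrix.transpose_mul,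
      Matrix.transpose_transpose, hP.eq]
  rw [WithLp.toLp_add, WithLp.toLp_add, WithLp.toLp_smul,
    inner_add_left, inner_add_left, real_inner_smul_left, idot, idot, idot, idot, idot]
  simp only [WithLp.ofLp_toLp, WithLp.ofLp_sub, WithLp.ofLp_add]
  rw [adj,
    adj]
  have e2 : dotProduct
      (A.mulVec ((xpo : Fin k → ℝ) - xo) + (dHat : Fin m → ℝ))
      (A.mulVec ((xpo : Fin k → ℝ) - xso))
      = dotProduct (A.mulVec ((xpo : Fin k → ℝ) - xo)) (A.mulVec ((xpo : Fin k → ℝ) - xso))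
        + dotProduct (dHat : Fin m → ℝ) (A.mulVec ((xpo : Fin k → ℝ) - xso)) :=
    add_dotProduct _ _ _
  rw [e2]
  have e4 : ρ * dotProduct (A.mulVec ((xpo : Fin k → ℝ) - xo)) (A.mulVec ((xpo : Fin k → ℝ) - xso))
      + dotProduct ((P.mulVec ((xpo : Fin k → ℝ) - xo) : Fin k → ℝ))
          ((xpo : Fin k → ℝ) - xso)
      = dotProduct ((xpo : Fin k → ℝ) - (xo : Fin k → ℝ))
          ((ρ • (A.transpose * A) + P).mulVec ((xpo : Fin k → ℝ) - xso)) := by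
    rw [Matrix.add_mulVec, dotProduct_add, Matrix.smul_mulVec,
      dotProduct_smul, smul_eq_mul, ← Matrix.mulVec_mulVec,
      dotProduct_comm ((xpo : Fin k → ℝ) - (xo : Fin k → ℝ)), adj, dotProduct_comm,
      dotProduct_comm ((P.mulVec ((xpo : Fin k → ℝ) - xo) : Fin k → ℝ)),
      dot_symm P hP]
  have e5 := three_point (ρ • (A.transpose * A) + P) hM xpo xo xso
  simp only [WithLp.toLp_sub, WithLp.toLp_ofLp] at e5
  linarith [e4, e5]


/-- The Lagrangian `L(x, λ) := ∑_i f_i(x_i) + ⟨λ, ∑_i A_i x_i − b⟩`. -/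
noncomputable def Lag {N m : ℕ} {n : Fin N → ℕ}
    (f : ∀ i, EuclideanSpace ℝ (Fin (n i)) → ℝ)
    (A : ∀ i, Matrix (Fin m) (Fin (n i)) ℝ) (b : EuclideanSpace ℝ (Fin m))
    (x : ∀ i, EuclideanSpace ℝ (Fin (n i))) (lam : EuclideanSpace ℝ (Fin m)) : ℝ :=
  (∑ i, f i (x i))
    + ⟪lam, (∑ i, (WithLp.toLp 2 ((A i).mulVec (x i)))) - b⟫

/-- The gradient of the smooth part of the local proximal subproblem,
`Aᵀλ̂ + ρ·Aᵀ(A(xp − x) + d̂) + P(xp − x)`. -/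
noncomputable def gradTerm {m k : ℕ} (A : Matrix (Fin m) (Fin k) ℝ)
    (P : Matrix (Fin k) (Fin k) ℝ) (ρ : ℝ)
    (lamHat dHat : EuclideanSpace ℝ (Fin m))
    (x xp : EuclideanSpace ℝ (Fin k)) : EuclideanSpace ℝ (Fin k) :=
  WithLp.toLp 2 (A.transpose.mulVec lamHat
    + ρ • A.transpose.mulVec
        (A.mulVec (xp - x) + dHat)
    + P.mulVec (xp - x))

set_option maxHeartbeats 2000000 in
/-- **Per-iteration descent inequality (eq. (30)).**  Under the quantized
residual accuracy (i), the relaxed dual update (ii), and the first-order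
optimality conditions (iii), one has
`0 ≤ L(x⁺, λ*) − L(x*, λ*) ≤ V(x, λ̂) − V(x⁺, λ̂⁺) − Θ + E_Δ`. -/
theorem per_iteration_descent
    (N m : ℕ) (hN : 1 ≤ N) (hm : 1 ≤ m)
    (n : Fin N → ℕ) (hn : ∀ i, 1 ≤ n i)
    (A : ∀ i, Matrix (Fin m) (Fin (n i)) ℝ)
    (b : EuclideanSpace ℝ (Fin m))
    (f : ∀ i, EuclideanSpace ℝ (Fin (n i)) → ℝ)
    (hf : ∀ i, ConvexOn ℝ Set.univ (f i))
    (ρ γ Δ : ℝ) (hρ : 0 < ρ) (hγ₀ : 0 < γ) (hγ₂ : γ < 2) (hΔ : 0 < Δ)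
    (ε : Fin N → ℝ) (hε : ∀ i, 0 < ε i)
    (P : ∀ i, Matrix (Fin (n i)) (Fin (n i)) ℝ)
    (hPsymm : ∀ i, (P i).IsSymm)
    (xs : ∀ i, EuclideanSpace ℝ (Fin (n i)))
    (lamStar : EuclideanSpace ℝ (Fin m))
    (hfeas : (∑ i, (WithLp.toLp 2 ((A i).mulVec (xs i)))) = b)
    (hsaddle : ∀ x : ∀ i, EuclideanSpace ℝ (Fin (n i)),
      Lag f A b xs lamStar ≤ Lag f A b x lamStar)
    (x xp : ∀ i, EuclideanSpace ℝ (Fin (n i)))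
    (lamHat lamHatP dHat dHatP : EuclideanSpace ℝ (Fin m))
    (hd : ‖dHat - ((∑ i, (WithLp.toLp 2 ((A i).mulVec (x i)))) - b)‖
            ≤ 2 * Real.sqrt m * Δ)
    (hdP : ‖dHatP - ((∑ i, (WithLp.toLp 2 ((A i).mulVec (xp i)))) - b)‖
            ≤ 2 * Real.sqrt m * Δ)
    (hdual : lamHatP = lamHat + (γ * ρ) • dHatP)
    (g : ∀ i, EuclideanSpace ℝ (Fin (n i)))
    (hsubgrad : ∀ i, ∀ z, f i (xp i) + ⟪g i, z - xp i⟫ ≤ f i z)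
    (hstat : ∀ i, g i + gradTerm (A i) (P i) ρ lamHat dHat (x i) (xp i) = 0) :
    0 ≤ Lag f A b xp lamStar - Lag f A b xs lamStar ∧
    Lag f A b xp lamStar - Lag f A b xs lamStar
      ≤ ((1 / 2) * ∑ i, wnormSq (ρ • ((A i).transpose * A i) + P i) (x i - xs i)
            + (1 / (2 * γ * ρ)) * ‖lamHat - lamStar‖ ^ 2)
        - ((1 / 2) * ∑ i, wnormSq (ρ • ((A i).transpose * A i) + P i) (xp i - xs i)
            + (1 / (2 * γ * ρ)) * ‖lamHatP - lamStar‖ ^ 2)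
        - (((2 - γ - ∑ i, ε i) / (2 * γ ^ 2 * ρ)) * ‖lamHat - lamHatP‖ ^ 2
            + (1 / 2) * ∑ i,
                wnormSq
                  (ρ • ((A i).transpose * A i) + P i
                    - (ρ / ε i) • ((A i).transpose * A i))
                  (x i - xp i))
        + ((8 / γ + 4 * |γ - 1| / γ + 2) * Real.sqrt m * Δ
              * max ‖lamHat - lamStar‖ ‖lamHatP - lamStar‖
            + 4 * ρ * Real.sqrt m * Δ * max ‖dHat‖ ‖dHatP‖) := by
  
  refine ⟨by linarith [hsaddle xp], ?_⟩
  set r : EuclideanSpace ℝ (Fin m) :=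
    (∑ i, (WithLp.toLp 2 <| (A i).mulVec (x i))) - b with hrdef
  set rP : EuclideanSpace ℝ (Fin m) :=
    (∑ i, (WithLp.toLp 2 <| (A i).mulVec (xp i))) - b with hrPdef
  -- scalar abbreviations
  have hΛ0 : (0:ℝ) ≤ max ‖lamHat - lamStar‖ ‖lamHatP - lamStar‖ :=
    le_trans (norm_nonneg _) (le_max_left _ _)
  have hD0 : (0:ℝ) ≤ max ‖dHat‖ ‖dHatP‖ := le_trans (norm_nonneg _) (le_max_left _ _)
  have hsm : (0:ℝ) ≤ Real.sqrt m := Real.sqrt_nonneg _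
  -- Lagrangian difference
  have hLd : Lag f A b xp lamStar - Lag f A b xs lamStar
      = (∑ i, (f i (xp i) - f i (xs i))) + ⟪lamStar, rP⟫ := by
    have hz : (∑ i, (WithLp.toLp 2 <| (A i).mulVec (xs i))) - b
        = (0 : EuclideanSpace ℝ (Fin m)) := by rw [hfeas]; exact sub_self b
    unfold Lag
    rw [hz, inner_zero_right, Finset.sum_sub_distrib]
    ring
  -- subgradient step
  have hsub : ∀ i ∈ Finset.univ, f i (xp i) - f i (xs i) ≤ ⟪g i, xp i - xs i⟫ := by
    intro i _
    have h := hsubgrad i (xs i)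
    have h2 : (xs i - xp i : EuclideanSpace ℝ (Fin (n i))) = -(xp i - xs i) := by abel
    rw [h2, inner_neg_right] at h
    linarith
  have hsum1 : (∑ i, (f i (xp i) - f i (xs i))) ≤ ∑ i, ⟪g i, xp i - xs i⟫ :=
    Finset.sum_le_sum hsub
  -- vector identities
  have hAsub : ∀ (y z : ∀ i, EuclideanSpace ℝ (Fin (n i))) i,
      (WithLp.toLp 2 <| (A i).mulVec (y i - z i))
        = (WithLp.toLp 2 <| (A i).mulVec (y i))
          - (WithLp.toLp 2 <| (A i).mulVec (z i)) :=
    fun y z i => mulVec_sub_E (A i) (y i) (z i)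
  have V1 : (∑ i, (WithLp.toLp 2 <| (A i).mulVec (xp i - xs i))) = rP := by
    calc (∑ i, (WithLp.toLp 2 <| (A i).mulVec (xp i - xs i)))
        = ∑ i, ((WithLp.toLp 2 <| (A i).mulVec (xp i))
            - (WithLp.toLp 2 <| (A i).mulVec (xs i))) :=
          Finset.sum_congr rfl fun i _ => hAsub xp xs i
      _ = (∑ i, (WithLp.toLp 2 <| (A i).mulVec (xp i)))
            - (∑ i, (WithLp.toLp 2 <| (A i).mulVec (xs i))) :=
          Finset.sum_sub_distrib _ _
      _ = rP := by rw [hfeas, hrPdef]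
  have V2 : (∑ i, (WithLp.toLp 2 <| (A i).mulVec (xp i - x i))) = rP - r := by
    calc (∑ i, (WithLp.toLp 2 <| (A i).mulVec (xp i - x i)))
        = ∑ i, ((WithLp.toLp 2 <| (A i).mulVec (xp i))
            - (WithLp.toLp 2 <| (A i).mulVec (x i))) :=
          Finset.sum_congr rfl fun i _ => hAsub xp x i
      _ = (∑ i, (WithLp.toLp 2 <| (A i).mulVec (xp i)))
            - (∑ i, (WithLp.toLp 2 <| (A i).mulVec (x i))) :=
          Finset.sum_sub_distrib _ _
      _ = rP - r := by rw [hrPdef, hrdef]; abel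
  -- gradient sum identity
  have hGsum : (∑ i, ⟪g i, xp i - xs i⟫)
      = -⟪lamHat, rP⟫ - ρ * ⟪dHat, rP⟫
        - ((∑ i, wnormSq (ρ • ((A i).transpose * A i) + P i) (xp i - xs i))
           - (∑ i, wnormSq (ρ • ((A i).transpose * A i) + P i) (x i - xs i))
           + (∑ i, wnormSq (ρ • ((A i).transpose * A i) + P i) (xp i - x i))) / 2 := by
    have hper : ∀ i ∈ Finset.univ, ⟪g i, xp i - xs i⟫
        = -(⟪lamHat, (WithLp.toLp 2 <| (A i).mulVec (xp i - xs i))⟫)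
          + -(ρ * ⟪dHat, (WithLp.toLp 2 <| (A i).mulVec (xp i - xs i))⟫)
          + -((wnormSq (ρ • ((A i).transpose * A i) + P i) (xp i - xs i)
              - wnormSq (ρ • ((A i).transpose * A i) + P i) (x i - xs i)
              + wnormSq (ρ • ((A i).transpose * A i) + P i) (xp i - x i)) / 2) := by
      intro i _
      have hg : g i = -(gradTerm (A i) (P i) ρ lamHat dHat (x i) (xp i)) :=
        eq_neg_of_add_eq_zero_left (hstat i)
      rw [hg, inner_neg_left]
      have := grad_inner (A i) (P i) (hPsymm i) ρ lamHat dHat (x i) (xp i) (xs i)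
      unfold gradTerm
      rw [this]
      ring
    rw [Finset.sum_congr rfl hper, Finset.sum_add_distrib, Finset.sum_add_distrib]
    have s1 : (∑ i, -(⟪lamHat, (WithLp.toLp 2 <| (A i).mulVec (xp i - xs i))⟫))
        = -⟪lamHat, rP⟫ := by
      rw [Finset.sum_neg_distrib, ← inner_sum, V1]
    have s2 : (∑ i, -(ρ * ⟪dHat, (WithLp.toLp 2 <| (A i).mulVec (xp i - xs i))⟫))
        = -(ρ * ⟪dHat, rP⟫) := by
      rw [Finset.sum_neg_distrib, ← Finset.mul_sum, ← inner_sum, V1]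
    have s3 : (∑ i, -((wnormSq (ρ • ((A i).transpose * A i) + P i) (xp i - xs i)
              - wnormSq (ρ • ((A i).transpose * A i) + P i) (x i - xs i)
              + wnormSq (ρ • ((A i).transpose * A i) + P i) (xp i - x i)) / 2))
        = -(((∑ i, wnormSq (ρ • ((A i).transpose * A i) + P i) (xp i - xs i))
           - (∑ i, wnormSq (ρ • ((A i).transpose * A i) + P i) (x i - xs i))
           + (∑ i, wnormSq (ρ • ((A i).transpose * A i) + P i) (xp i - x i))) / 2) := by
      rw [Finset.sum_neg_distrib, ← Finset.sum_div, Finset.sum_add_distrib,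
        Finset.sum_sub_distrib]
    rw [s1, s2, s3]
    ring
  -- split of the w-term
  have hWsplit : (∑ i, wnormSq (ρ • ((A i).transpose * A i) + P i) (xp i - x i))
      = (∑ i, wnormSq (ρ • ((A i).transpose * A i) + P i
              - (ρ / ε i) • ((A i).transpose * A i)) (x i - xp i))
        + ∑ i, (ρ / ε i)
            * ‖(WithLp.toLp 2 <| (A i).mulVec (xp i - x i))‖ ^ 2 := by
    rw [← Finset.sum_add_distrib]
    refine Finset.sum_congr rfl fun i _ => ?_
    rw [wnormSq_sub_M, wnormSq_smul_M, wnormSq_ATA, wnormSq_sub_comm _ (x i) (xp i)]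
    have hAneg : (WithLp.toLp 2 <| (A i).mulVec (x i - xp i))
        = -(WithLp.toLp 2 <| (A i).mulVec (xp i - x i)) :=
      mulVec_sub_comm_E (A i) (x i) (xp i)
    rw [WithLp.ofLp_sub, hAneg, norm_neg]
    ring
  -- dual update basic facts
  have hδ : lamHatP - lamHat = (γ * ρ) • dHatP := by rw [hdual]; abel
  have hγρ : (0:ℝ) < γ * ρ := mul_pos hγ₀ hρ
  -- D2 : polarization
  have D2 : ⟪lamStar - lamHat, dHatP⟫
      = (1 / (2 * γ * ρ)) * (‖lamHat - lamStar‖ ^ 2 + ‖lamHatP - lamHat‖ ^ 2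
          - ‖lamHatP - lamStar‖ ^ 2) := by
    have hpol := norm_sub_sq_real (lamStar - lamHat) (lamHatP - lamHat)
    have hab : (lamStar - lamHat) - (lamHatP - lamHat) = lamStar - lamHatP := by abel
    rw [hab] at hpol
    have hip : ⟪lamStar - lamHat, lamHatP - lamHat⟫ = (γ * ρ) * ⟪lamStar - lamHat, dHatP⟫ := by
      rw [hδ, real_inner_smul_right]
    rw [hip] at hpol
    rw [norm_sub_rev lamStar lamHat, norm_sub_rev lamStar lamHatP] at hpol
    have : (γ * ρ) * ⟪lamStar - lamHat, dHatP⟫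
        = (‖lamHat - lamStar‖ ^ 2 + ‖lamHatP - lamHat‖ ^ 2 - ‖lamHatP - lamStar‖ ^ 2) / 2 := by
      linarith
    field_simp at this ⊢
    linarith [this]
  -- norm of dual step
  have hnd : ‖lamHatP - lamHat‖ = (γ * ρ) * ‖dHatP‖ := by
    rw [hδ, norm_smul, Real.norm_eq_abs, abs_of_pos hγρ]
  -- quadratic collection (exact identity)
  have hQ : (1 / (2 * γ * ρ)) * ‖lamHatP - lamHat‖ ^ 2 - ρ * ‖dHatP‖ ^ 2
        + (ρ / 2) * (∑ i, ε i) * ‖dHatP‖ ^ 2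
      = -(((2 - γ - ∑ i, ε i) / (2 * γ ^ 2 * ρ)) * ‖lamHat - lamHatP‖ ^ 2) := by
    rw [norm_sub_rev lamHat lamHatP, hnd]
    field_simp
    ring
  -- Young step
  have D6 : ρ * ⟪rP - r, dHatP⟫
      ≤ (1 / 2) * (∑ i, (ρ / ε i)
            * ‖(WithLp.toLp 2 <| (A i).mulVec (xp i - x i))‖ ^ 2)
        + (ρ / 2) * (∑ i, ε i) * ‖dHatP‖ ^ 2 := by
    have hsplit : ⟪rP - r, dHatP⟫
        = ∑ i, ⟪(WithLp.toLp 2 <| (A i).mulVec (xp i - x i)), dHatP⟫ := by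
      rw [← V2, sum_inner]
    rw [hsplit, Finset.mul_sum]
    have hperY : ∀ i ∈ Finset.univ,
        ρ * ⟪(WithLp.toLp 2 <| (A i).mulVec (xp i - x i)), dHatP⟫
          ≤ (1/2) * ((ρ / ε i)
              * ‖(WithLp.toLp 2 <| (A i).mulVec (xp i - x i))‖ ^ 2)
            + (ρ / 2) * (ε i) * ‖dHatP‖ ^ 2 := by
      intro i _
      have hy := young_s11 (WithLp.toLp 2 <| (A i).mulVec (xp i - x i)) dHatP
        (ε i) (hε i)
      have := mul_le_mul_of_nonneg_left hy hρ.le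
      calc ρ * ⟪(WithLp.toLp 2 <| (A i).mulVec (xp i - x i)), dHatP⟫
          ≤ ρ * ((1 / (2 * ε i))
              * ‖(WithLp.toLp 2 <| (A i).mulVec (xp i - x i))‖ ^ 2
            + (ε i / 2) * ‖dHatP‖ ^ 2) := this
        _ = (1/2) * ((ρ / ε i)
              * ‖(WithLp.toLp 2 <| (A i).mulVec (xp i - x i))‖ ^ 2)
            + (ρ / 2) * (ε i) * ‖dHatP‖ ^ 2 := by
            field_simp
    calc (∑ i, ρ * ⟪(WithLp.toLp 2 <| (A i).mulVec (xp i - x i)), dHatP⟫)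
        ≤ ∑ i, ((1/2) * ((ρ / ε i)
              * ‖(WithLp.toLp 2 <| (A i).mulVec (xp i - x i))‖ ^ 2)
            + (ρ / 2) * (ε i) * ‖dHatP‖ ^ 2) := Finset.sum_le_sum hperY
      _ = (1 / 2) * (∑ i, (ρ / ε i)
              * ‖(WithLp.toLp 2 <| (A i).mulVec (xp i - x i))‖ ^ 2)
          + (ρ / 2) * (∑ i, ε i) * ‖dHatP‖ ^ 2 := by
          have hbs : (∑ i : Fin N, ρ / 2 * ε i * ‖dHatP‖ ^ 2)
              = (ρ / 2 * ∑ i, ε i) * ‖dHatP‖ ^ 2 := by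
            rw [← Finset.sum_mul, ← Finset.mul_sum]
          rw [Finset.sum_add_distrib, hbs, ← Finset.mul_sum]

  -- error-term bounds
  have hΛ1 : ‖lamHat - lamStar‖ ≤ max ‖lamHat - lamStar‖ ‖lamHatP - lamStar‖ := le_max_left _ _
  have hΛ2 : ‖lamHatP - lamStar‖ ≤ max ‖lamHat - lamStar‖ ‖lamHatP - lamStar‖ := le_max_right _ _
  have hD1 : ‖dHat‖ ≤ max ‖dHat‖ ‖dHatP‖ := le_max_left _ _
  have E1 : -⟪lamStar - lamHat, dHatP - rP⟫
      ≤ 2 * Real.sqrt m * Δ * max ‖lamHat - lamStar‖ ‖lamHatP - lamStar‖ := by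
    have h1 : -⟪lamStar - lamHat, dHatP - rP⟫ = ⟪-(lamStar - lamHat), dHatP - rP⟫ :=
      (inner_neg_left _ _).symm
    have h2 := real_inner_le_norm (-(lamStar - lamHat)) (dHatP - rP)
    rw [norm_neg, norm_sub_rev] at h2
    calc -⟪lamStar - lamHat, dHatP - rP⟫ ≤ ‖lamHat - lamStar‖ * ‖dHatP - rP‖ := by
          rw [h1]; exact h2
      _ ≤ (max ‖lamHat - lamStar‖ ‖lamHatP - lamStar‖) * (2 * Real.sqrt m * Δ) :=
          mul_le_mul hΛ1 hdP (norm_nonneg _) hΛ0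
      _ = 2 * Real.sqrt m * Δ * max ‖lamHat - lamStar‖ ‖lamHatP - lamStar‖ := by ring
  have E2 : ρ * ⟪dHat, dHatP - rP⟫ ≤ 2 * ρ * Real.sqrt m * Δ * max ‖dHat‖ ‖dHatP‖ := by
    have h2 := real_inner_le_norm dHat (dHatP - rP)
    have h3 : ‖dHat‖ * ‖dHatP - rP‖ ≤ (max ‖dHat‖ ‖dHatP‖) * (2 * Real.sqrt m * Δ) :=
      mul_le_mul hD1 hdP (norm_nonneg _) hD0
    have h4 : ⟪dHat, dHatP - rP⟫ ≤ (max ‖dHat‖ ‖dHatP‖) * (2 * Real.sqrt m * Δ) :=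
      le_trans h2 h3
    calc ρ * ⟪dHat, dHatP - rP⟫
        ≤ ρ * ((max ‖dHat‖ ‖dHatP‖) * (2 * Real.sqrt m * Δ)) :=
          mul_le_mul_of_nonneg_left h4 hρ.le
      _ = 2 * ρ * Real.sqrt m * Δ * max ‖dHat‖ ‖dHatP‖ := by ring
  have E3 : ρ * ⟪(dHatP - rP) - (dHat - r), dHatP⟫
      ≤ 8 / γ * (Real.sqrt m * Δ * max ‖lamHat - lamStar‖ ‖lamHatP - lamStar‖) := by
    set X : EuclideanSpace ℝ (Fin m) := (dHatP - rP) - (dHat - r) with hXdef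
    have hX : ‖X‖ ≤ 4 * Real.sqrt m * Δ := by
      calc ‖X‖ ≤ ‖dHatP - rP‖ + ‖dHat - r‖ := norm_sub_le _ _
        _ ≤ 4 * Real.sqrt m * Δ := by linarith
    have hlam : ‖lamHatP - lamHat‖
        ≤ 2 * max ‖lamHat - lamStar‖ ‖lamHatP - lamStar‖ := by
      calc ‖lamHatP - lamHat‖ ≤ ‖lamHatP - lamStar‖ + ‖lamStar - lamHat‖ :=
            norm_sub_le_norm_sub_add_norm_sub _ _ _
        _ = ‖lamHatP - lamStar‖ + ‖lamHat - lamStar‖ := by rw [norm_sub_rev lamStar]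
        _ ≤ 2 * max ‖lamHat - lamStar‖ ‖lamHatP - lamStar‖ := by
            have := le_max_left ‖lamHat - lamStar‖ ‖lamHatP - lamStar‖
            have := le_max_right ‖lamHat - lamStar‖ ‖lamHatP - lamStar‖
            linarith
    have hip : ⟪X, lamHatP - lamHat⟫ = (γ * ρ) * ⟪X, dHatP⟫ := by
      rw [hδ, real_inner_smul_right]
    have h4 : ⟪X, lamHatP - lamHat⟫
        ≤ (4 * Real.sqrt m * Δ) * (2 * max ‖lamHat - lamStar‖ ‖lamHatP - lamStar‖) := by
      refine le_trans (real_inner_le_norm _ _) (mul_le_mul hX hlam (norm_nonneg _) ?_)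
      positivity
    have h5 : γ * (ρ * ⟪X, dHatP⟫)
        ≤ 8 * (Real.sqrt m * Δ * max ‖lamHat - lamStar‖ ‖lamHatP - lamStar‖) := by
      have : γ * (ρ * ⟪X, dHatP⟫) = ⟪X, lamHatP - lamHat⟫ := by rw [hip]; ring
      rw [this]; linarith
    calc ρ * ⟪X, dHatP⟫ = (γ * (ρ * ⟪X, dHatP⟫)) / γ := by field_simp
      _ ≤ (8 * (Real.sqrt m * Δ * max ‖lamHat - lamStar‖ ‖lamHatP - lamStar‖)) / γ :=
          (div_le_div_iff_of_pos_right hγ₀).mpr h5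
      _ = 8 / γ * (Real.sqrt m * Δ * max ‖lamHat - lamStar‖ ‖lamHatP - lamStar‖) := by ring
  -- nonnegative slack terms
  have hslack1 : 0 ≤ 4 * |γ - 1| / γ * Real.sqrt m * Δ
      * max ‖lamHat - lamStar‖ ‖lamHatP - lamStar‖ := by
    have h1 : (0:ℝ) ≤ 4 * |γ - 1| / γ := div_nonneg (by positivity) hγ₀.le
    exact mul_nonneg (mul_nonneg (mul_nonneg h1 hsm) hΔ.le) hΛ0
  have hslack2 : 0 ≤ 2 * ρ * Real.sqrt m * Δ * max ‖dHat‖ ‖dHatP‖ :=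
    mul_nonneg (mul_nonneg (mul_nonneg (by linarith) hsm) hΔ.le) hD0
  -- exact dual decomposition
  have i1 : ⟪lamStar, rP⟫ - ⟪lamHat, rP⟫ = ⟪lamStar - lamHat, rP⟫ :=
    (inner_sub_left _ _ _).symm
  have i2 : ⟪lamStar - lamHat, rP⟫
      = ⟪lamStar - lamHat, dHatP⟫ - ⟪lamStar - lamHat, dHatP - rP⟫ := by
    rw [← inner_sub_right]
    congr 1
    abel
  have i3 : ρ * ⟪dHat, rP⟫ = ρ * ⟪dHat, dHatP⟫ - ρ * ⟪dHat, dHatP - rP⟫ := by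
    have : ⟪dHat, rP⟫ = ⟪dHat, dHatP⟫ - ⟪dHat, dHatP - rP⟫ := by
      rw [← inner_sub_right]
      congr 1
      abel
    rw [this]; ring
  have i4 : ρ * ⟪dHat, dHatP⟫ = ρ * ‖dHatP‖ ^ 2 - ρ * ⟪dHatP - dHat, dHatP⟫ := by
    have : ⟪dHatP - dHat, dHatP⟫ = ‖dHatP‖ ^ 2 - ⟪dHat, dHatP⟫ := by
      rw [inner_sub_left, real_inner_self_eq_norm_sq]
    rw [this]; ring
  have i5 : ρ * ⟪dHatP - dHat, dHatP⟫
      = ρ * ⟪rP - r, dHatP⟫ + ρ * ⟪(dHatP - rP) - (dHat - r), dHatP⟫ := by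
    have : ⟪dHatP - dHat, dHatP⟫
        = ⟪rP - r, dHatP⟫ + ⟪(dHatP - rP) - (dHat - r), dHatP⟫ := by
      rw [← inner_add_left]
      congr 1
      abel
    rw [this]; ring
  -- assemble
  linarith [hLd, hsum1, hGsum, hWsplit, D2, hQ, D6, E1, E2, E3, hslack1, hslack2,
    i1, i2, i3, i4, i5]
end
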